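/- Let f : ℝⁿ → ℝ be twice continuously differentiable with L₂-Lipschitz Hessian, let x ∈ ℝⁿ, g = ∇f(x), H = ∇²f(x). Let σ > 0 with σ ≤ σ_max, r > 0, C_up > 0, suppose H + σrI is invertible, and let s = −(H + σrI)⁻¹g satisfy ‖s‖ ≤ C_up r. Then ‖∇f(x+s)‖ ≤ C_up(L₂C_up/2 + σ_max) r²; equivalently r² ≥ 2‖∇f(x+s)‖ / (C_up(L₂C_up + 2σ_max)). -/

import Mathlib

open RealInnerProductSpace

/-- Quadratic Taylor estimate for a map with Lipschitz derivative. -/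
theorem quad_taylor_aux {E : Type*} [NormedAddCommGroup E] [NormedSpace ℝ E]
    {F : Type*} [NormedAddCommGroup F] [NormedSpace ℝ F]
    (G : E → F) (hG : Differentiable ℝ G) (L : ℝ)
    (hLip : ∀ y z : E, ‖fderiv ℝ G y - fderiv ℝ G z‖ ≤ L * ‖y - z‖)
    (x s : E) :
    ‖G (x + s) - G x - fderiv ℝ G x s‖ ≤ L / 2 * ‖s‖ ^ 2 := by
  set φ : ℝ → F := fun t => G (x + t • s) - G x - t • (fderiv ℝ G x s) with hφ
  have hφ' : ∀ t : ℝ, HasDerivAt φ (fderiv ℝ G (x + t • s) s - fderiv ℝ G x s) t := by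
    intro t
    have h1 : HasDerivAt (fun t : ℝ => x + t • s) s t := by
      simpa using ((hasDerivAt_id t).smul_const s).const_add x
    have h2 : HasDerivAt (fun t : ℝ => G (x + t • s)) (fderiv ℝ G (x + t • s) s) t :=
      (hG (x + t • s)).hasFDerivAt.comp_hasDerivAt t h1
    have h3 := (h2.sub_const (G x)).sub ((hasDerivAt_id t).smul_const (fderiv ℝ G x s))
    simp only [one_smul] at h3
    exact h3
  have key := image_norm_le_of_norm_deriv_right_le_deriv_boundary
    (f := φ) (f' := fun t => fderiv ℝ G (x + t • s) s - fderiv ℝ G x s)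
    (a := 0) (b := 1)
    (fun t _ => (hφ' t).continuousAt.continuousWithinAt)
    (fun t ht => (hφ' t).hasDerivWithinAt)
    (B := fun t => L / 2 * ‖s‖ ^ 2 * t ^ 2) (B' := fun t => L * ‖s‖ ^ 2 * t)
    (by simp [φ])
    (fun t => by
      have := ((hasDerivAt_pow 2 t).const_mul (L / 2 * ‖s‖ ^ 2))
      exact this.congr_deriv (by push_cast; ring))
    (fun t ht => by
      have h3 : ‖(fderiv ℝ G (x + t • s) - fderiv ℝ G x) s‖ ≤
          ‖fderiv ℝ G (x + t • s) - fderiv ℝ G x‖ * ‖s‖ :=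
        ContinuousLinearMap.le_opNorm _ s
      have h4 := hLip (x + t • s) x
      simp only [add_sub_cancel_left] at h4
      have h5 : ‖t • s‖ = t * ‖s‖ := by
        rw [norm_smul, Real.norm_eq_abs, abs_of_nonneg ht.1]
      calc ‖fderiv ℝ G (x + t • s) s - fderiv ℝ G x s‖
          = ‖(fderiv ℝ G (x + t • s) - fderiv ℝ G x) s‖ := by simp
        _ ≤ ‖fderiv ℝ G (x + t • s) - fderiv ℝ G x‖ * ‖s‖ := h3
        _ ≤ (L * (t * ‖s‖)) * ‖s‖ := by
            apply mul_le_mul_of_nonneg_right _ (norm_nonneg s)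
            rw [← h5]; exact h4
        _ = L * ‖s‖ ^ 2 * t := by ring)
  have := key (x := 1) (by norm_num)
  simpa [φ] using this

/-- Gradient bound after a regularized Newton step: if `H + σrI` is invertible and
`s = -(H + σrI)⁻¹g` satisfies `‖s‖ ≤ C_up r`, with `0 < σ ≤ σ_max`, then
`‖∇f(x+s)‖ ≤ C_up(L₂C_up/2 + σ_max)r²`, equivalently
`r² ≥ 2‖∇f(x+s)‖/(C_up(L₂C_up + 2σ_max))`. -/
theorem gradient_bound_regularized_newton
    (n : ℕ) (f : EuclideanSpace ℝ (Fin n) → ℝ) (L₂ : ℝ) (hL₂ : 0 < L₂)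
    (hf : ContDiff ℝ 2 f)
    (hLip : ∀ y z : EuclideanSpace ℝ (Fin n),
      ‖fderiv ℝ (gradient f) y - fderiv ℝ (gradient f) z‖ ≤ L₂ * ‖y - z‖)
    (x : EuclideanSpace ℝ (Fin n))
    (σ σ_max r C_up : ℝ) (hσ : 0 < σ) (hσmax : σ ≤ σ_max) (hr : 0 < r) (hC : 0 < C_up)
    (hinv : Function.Bijective
      (fun v : EuclideanSpace ℝ (Fin n) => fderiv ℝ (gradient f) x v + (σ * r) • v))
    (s : EuclideanSpace ℝ (Fin n))
    (hs : fderiv ℝ (gradient f) x s + (σ * r) • s = -gradient f x)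
    (hnorm : ‖s‖ ≤ C_up * r) :
    ‖gradient f (x + s)‖ ≤ C_up * (L₂ * C_up / 2 + σ_max) * r ^ 2 ∧
      r ^ 2 ≥ 2 * ‖gradient f (x + s)‖ / (C_up * (L₂ * C_up + 2 * σ_max)) := by
  have hG : Differentiable ℝ (gradient f) := by
    have hdf : Differentiable ℝ (fderiv ℝ f) :=
      (hf.fderiv_right (m := 1) (by norm_num)).differentiable one_ne_zero
    have : gradient f = fun y => (InnerProductSpace.toDual ℝ _).symm (fderiv ℝ f y) := rfl
    rw [this]
    exact (InnerProductSpace.toDual ℝ _).symm.toContinuousLinearEquiv.differentiable.comp hdf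
  have hquad := quad_taylor_aux (gradient f) hG L₂ hLip x s
  -- from hs : g + H s = -(σr) s
  have hzero : gradient f x + fderiv ℝ (gradient f) x s + (σ * r) • s = 0 := by
    rw [add_assoc, hs]; simp
  have hdecomp : gradient f (x + s) =
      (gradient f (x + s) - gradient f x - fderiv ℝ (gradient f) x s) - (σ * r) • s := by
    have h : (gradient f (x + s) - gradient f x - fderiv ℝ (gradient f) x s) - (σ * r) • s =
        gradient f (x + s) - (gradient f x + fderiv ℝ (gradient f) x s + (σ * r) • s) := by
      abel
    rw [h, hzero, sub_zero]
  have hσr : 0 ≤ σ * r := le_of_lt (mul_pos hσ hr)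
  have hbound : ‖gradient f (x + s)‖ ≤ L₂ / 2 * ‖s‖ ^ 2 + σ * r * ‖s‖ := by
    rw [hdecomp]
    calc ‖_ - (σ * r) • s‖ ≤ ‖gradient f (x + s) - gradient f x - fderiv ℝ (gradient f) x s‖
          + ‖(σ * r) • s‖ := norm_sub_le _ _
      _ ≤ L₂ / 2 * ‖s‖ ^ 2 + σ * r * ‖s‖ :=
          add_le_add hquad (le_of_eq (by rw [norm_smul, Real.norm_eq_abs, abs_of_nonneg hσr]))
  have hsnn : 0 ≤ ‖s‖ := norm_nonneg s
  have hσmax0 : 0 < σ_max := lt_of_lt_of_le hσ hσmax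
  have hmain : ‖gradient f (x + s)‖ ≤ C_up * (L₂ * C_up / 2 + σ_max) * r ^ 2 := by
    have h1 : L₂ / 2 * ‖s‖ ^ 2 ≤ L₂ / 2 * (C_up * r) ^ 2 := by
      gcongr
    have h2 : σ * r * ‖s‖ ≤ σ_max * r * (C_up * r) := by
      have : σ * r * ‖s‖ ≤ σ * r * (C_up * r) := by gcongr
      refine this.trans ?_
      gcongr
    nlinarith [hbound]
  refine ⟨hmain, ?_⟩
  have hD : 0 < C_up * (L₂ * C_up + 2 * σ_max) := by positivity
  rw [ge_iff_le, div_le_iff₀ hD]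
  nlinarith [hmain]
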